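/- Let k, m be positive integers with m ≥ 2 and m < d ≤ max(k+1, k^{m/(m-1)}/2). Then there exists an m × d integer matrix A with |a_{i,j}| ≤ k for all i, j, such that every m × m submatrix of A has full rank. -/

import Mathlib

open Finset Matrix

lemma col_pigeon (p k m' x : ℕ) (hp : p.Prime) (hkp : k < p)
    (hcard : p ^ m' < (k + 1) ^ (m' + 1)) :
    ∃ v : Fin (m' + 1) → ℤ, (∀ i, |v i| ≤ (k : ℤ)) ∧
      ∃ s : ZMod p, s ≠ 0 ∧ ∀ i : Fin (m' + 1),
        ((v i : ℤ) : ZMod p) = s * (x : ZMod p) ^ (i : ℕ) := by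
  haveI : Fact p.Prime := ⟨hp⟩
  have hcard' : Fintype.card (Fin m' → ZMod p) <
      Fintype.card (Fin (m' + 1) → Fin (k + 1)) := by
    simpa [ZMod.card] using hcard
  obtain ⟨a, b, hab, hfab⟩ := Fintype.exists_ne_map_eq_of_card_lt
    (fun (w : Fin (m' + 1) → Fin (k + 1)) (t : Fin m') =>
      ((w t.succ : ℕ) : ZMod p) - ((w 0 : ℕ) : ZMod p) * (x : ZMod p) ^ (t.succ : ℕ)) hcard'
  set v : Fin (m' + 1) → ℤ := fun i => ((a i : ℕ) : ℤ) - ((b i : ℕ) : ℤ) with hv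
  set s : ZMod p := ((a 0 : ℕ) : ZMod p) - ((b 0 : ℕ) : ZMod p) with hs
  have hbound : ∀ i, |v i| ≤ (k : ℤ) := by
    intro i
    have h1 := (a i).is_lt
    have h2 := (b i).is_lt
    rw [hv, abs_le]
    constructor <;> push_cast <;> omega
  have key : ∀ i : Fin (m' + 1), ((v i : ℤ) : ZMod p) = s * (x : ZMod p) ^ (i : ℕ) := by
    intro i
    induction i using Fin.cases with
    | zero => simp [hv, hs]
    | succ t =>
      have h := congrFun hfab t
      simp only [hv, hs]
      push_cast
      linear_combination h
  refine ⟨v, hbound, s, ?_, key⟩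
  intro hs0
  apply hab
  funext i
  have hz : ((v i : ℤ) : ZMod p) = 0 := by rw [key i, hs0, zero_mul]
  have hdvd : (p : ℤ) ∣ v i := (ZMod.intCast_zmod_eq_zero_iff_dvd _ _).mp hz
  have hvi : v i = 0 := by
    by_contra hne
    have h1 : (p : ℤ) ∣ |v i| := (dvd_abs _ _).mpr hdvd
    have h2 : (p : ℤ) ≤ |v i| := Int.le_of_dvd (abs_pos.mpr hne) h1
    have := hbound i
    have : (k : ℤ) < p := by exact_mod_cast hkp
    omega
  have : ((a i : ℕ) : ℤ) = ((b i : ℕ) : ℤ) := by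
    have := hvi
    simp only [hv] at this
    omega
  exact Fin.ext (by exact_mod_cast this)

lemma build (k m d p : ℕ) (hp : p.Prime) (hdp : d ≤ p)
    (hcol : ∀ x : ℕ, ∃ v : Fin m → ℤ, (∀ i, |v i| ≤ (k : ℤ)) ∧
      ∃ s : ZMod p, s ≠ 0 ∧ ∀ i : Fin m, ((v i : ℤ) : ZMod p) = s * (x : ZMod p) ^ (i : ℕ)) :
    ∃ A : Matrix (Fin m) (Fin d) ℤ,
      (∀ i j, |A i j| ≤ (k : ℤ)) ∧
      (∀ g : Fin m → Fin d, Function.Injective g → (A.submatrix id g).det ≠ 0) := by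
  haveI : Fact p.Prime := ⟨hp⟩
  choose vv hvb ss hss hvs using fun j : Fin d => hcol (j : ℕ)
  refine ⟨Matrix.of fun i j => vv j i, fun i j => hvb j i, ?_⟩
  intro g hg hdet
  set B : Matrix (Fin m) (Fin m) ℤ := (Matrix.of fun i j => vv j i).submatrix id g with hB
  set f : ℤ →+* ZMod p := Int.castRingHom (ZMod p) with hf
  have hmap0 : (B.map f).det = 0 := by
    have h := congrArg f hdet
    rw [RingHom.map_det, map_zero] at h
    simpa [RingHom.mapMatrix_apply] using h
  set xs : Fin m → ZMod p := fun t => ((g t : ℕ) : ZMod p) with hxs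
  have hBmap : B.map f = (Matrix.vandermonde xs)ᵀ * Matrix.diagonal (fun t => ss (g t)) := by
    ext i t
    rw [Matrix.mul_diagonal]
    simp only [Matrix.map_apply, hB, Matrix.submatrix_apply, id_eq, Matrix.of_apply,
      Matrix.transpose_apply, Matrix.vandermonde, hf, Matrix.of_apply]
    rw [mul_comm]
    exact hvs (g t) i
  rw [hBmap, Matrix.det_mul, Matrix.det_transpose, Matrix.det_vandermonde,
    Matrix.det_diagonal] at hmap0
  have hxsinj : Function.Injective xs := by
    intro t t' h
    apply hg
    have ht : (g t : ℕ) < p := lt_of_lt_of_le (g t).is_lt hdp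
    have ht' : (g t' : ℕ) < p := lt_of_lt_of_le (g t').is_lt hdp
    have hval : (xs t).val = (xs t').val := congrArg ZMod.val h
    simp only [hxs] at hval
    rw [ZMod.val_cast_of_lt ht, ZMod.val_cast_of_lt ht'] at hval
    exact Fin.ext hval
  rcases mul_eq_zero.mp hmap0 with h | h
  · rw [Finset.prod_eq_zero_iff] at h
    obtain ⟨i, _, h⟩ := h
    rw [Finset.prod_eq_zero_iff] at h
    obtain ⟨j, hj, h⟩ := h
    have : xs j ≠ xs i := fun hh => (Finset.mem_Ioi.mp hj).ne' (hxsinj hh)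
    exact this (sub_eq_zero.mp h)
  · rw [Finset.prod_eq_zero_iff] at h
    obtain ⟨t, _, h⟩ := h
    exact hss (g t) h

theorem stmt_3 (k m d : ℕ) (hk : 1 ≤ k) (hm : 2 ≤ m) (hmd : m < d)
    (hd : (d : ℝ) ≤ max ((k : ℝ) + 1) ((k : ℝ) ^ ((m : ℝ) / ((m : ℝ) - 1)) / 2)) :
    ∃ A : Matrix (Fin m) (Fin d) ℤ,
      (∀ i j, |A i j| ≤ (k : ℤ)) ∧
      (∀ g : Fin m → Fin d, Function.Injective g → (A.submatrix id g).det ≠ 0) := by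
  by_cases hcase : d ≤ k + 1
  · -- small case: centered residues of a Vandermonde matrix mod a prime in (k, 2k]
    obtain ⟨p, hp, hkp, hp2k⟩ := Nat.exists_prime_lt_and_le_two_mul k (by omega)
    haveI : Fact p.Prime := ⟨hp⟩
    apply build k m d p hp (by omega)
    intro x
    refine ⟨fun i => ((x : ZMod p) ^ (i : ℕ)).valMinAbs, ?_, 1, one_ne_zero, ?_⟩
    · intro i
      have h1 : ((x : ZMod p) ^ (i : ℕ)).valMinAbs.natAbs ≤ p / 2 :=
        ZMod.natAbs_valMinAbs_le _
      have h2 : p / 2 ≤ k := by omega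
      rw [Int.abs_eq_natAbs]
      exact_mod_cast le_trans h1 h2
    · intro i
      rw [one_mul, ZMod.coe_valMinAbs]
  · -- large case: pigeonhole / Minkowski-style columns mod a prime in (d-1, 2(d-1)]
    have hd2 : (d : ℝ) ≤ (k : ℝ) ^ ((m : ℝ) / ((m : ℝ) - 1)) / 2 := by
      rcases le_max_iff.mp hd with h | h
      · exfalso; apply hcase
        have : (d : ℝ) ≤ ((k + 1 : ℕ) : ℝ) := by push_cast; linarith
        exact_mod_cast this
      · exact h
    obtain ⟨m', rfl⟩ : ∃ m', m = m' + 1 := ⟨m - 1, by omega⟩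
    have hm' : 1 ≤ m' := by omega
    obtain ⟨p, hp, hdp1, hp2d⟩ := Nat.exists_prime_lt_and_le_two_mul (d - 1) (by omega)
    have hdp : d ≤ p := by omega
    have hkp : k < p := by omega
    apply build k (m' + 1) d p hp hdp
    intro x
    apply col_pigeon p k m' x hp hkp
    -- the counting inequality
    have hk0 : (0 : ℝ) ≤ (k : ℝ) := by positivity
    have hm's : ((m' : ℝ)) ≠ 0 := by
      have : (1 : ℝ) ≤ (m' : ℝ) := by exact_mod_cast hm'
      linarith
    have hrm : ((m' + 1 : ℕ) : ℝ) / (((m' + 1 : ℕ) : ℝ) - 1) * (m' : ℝ) = ((m' + 1 : ℕ) : ℝ) := by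
      push_cast
      field_simp
      rw [add_sub_cancel_right, div_self hm's]
    have h2d : (2 * d : ℝ) ≤ (k : ℝ) ^ (((m' + 1 : ℕ) : ℝ) / (((m' + 1 : ℕ) : ℝ) - 1)) := by
      linarith
    have hppos : (0 : ℝ) ≤ (p : ℝ) := by positivity
    have hplt : (p : ℝ) < 2 * d := by
      have : p ≤ 2 * (d - 1) := hp2d
      have hd1 : 1 ≤ d := by omega
      have : (p : ℕ) < 2 * d := by omega
      exact_mod_cast this
    have step1 : (p : ℝ) ^ m' < (2 * d : ℝ) ^ m' := by
      apply pow_lt_pow_left₀ hplt hppos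
      omega
    have step2 : ((2 * d : ℝ)) ^ m' ≤ ((k : ℝ) ^ (((m' + 1 : ℕ) : ℝ) / (((m' + 1 : ℕ) : ℝ) - 1))) ^ m' := by
      apply pow_le_pow_left₀ (by positivity) h2d
    have step3 : ((k : ℝ) ^ (((m' + 1 : ℕ) : ℝ) / (((m' + 1 : ℕ) : ℝ) - 1))) ^ m'
        = (k : ℝ) ^ (m' + 1 : ℕ) := by
      rw [← Real.rpow_natCast ((k : ℝ) ^ (((m' + 1 : ℕ) : ℝ) / (((m' + 1 : ℕ) : ℝ) - 1))) m',
        ← Real.rpow_mul hk0, hrm, Real.rpow_natCast]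
    have hfin : (p : ℝ) ^ m' < (k : ℝ) ^ (m' + 1 : ℕ) := by
      rw [← step3]; exact lt_of_lt_of_le step1 step2
    have hnat : p ^ m' < k ^ (m' + 1) := by exact_mod_cast hfin
    calc p ^ m' < k ^ (m' + 1) := hnat
      _ ≤ (k + 1) ^ (m' + 1) := Nat.pow_le_pow_left (by omega) _
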